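/- Let K be a commutative ring, A, B two n×n matrices over K, and 0 ≤ k ≤ n. Then Σ_{P ∈ P_n} Σ_{Q ∈ Q_n} [Q·P·A·P^{-1}·Q + B]^{(k)} = 2^n · Σ_{i=0}^{k} ((n−i)!·(n−k+i)!/(n−k)!) · [A]^{(i)} · [B]^{(k−i)}, where the integer coefficients are interpreted via the canonical map from the natural numbers to K. -/

import Mathlib

/-- `[A]^(k)`: the sum of all principal `k × k` minors of `A`. -/
noncomputable def principalMinorSum {K : Type*} [CommRing K] {n : ℕ}
    (A : Matrix (Fin n) (Fin n) K) (k : ℕ) : K :=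
  ∑ S : {s : Finset (Fin n) // s.card = k},
    (A.submatrix (S.1.orderEmbOfFin S.2) (S.1.orderEmbOfFin S.2)).det

/-- The sign (diagonal `±1`) matrix determined by `ε : Fin n → Bool`. -/
def signMatrix (K : Type*) [CommRing K] {n : ℕ} (ε : Fin n → Bool) :
    Matrix (Fin n) (Fin n) K :=
  Matrix.diagonal (fun i => if ε i then 1 else -1)

open Finset

section PM

variable {K : Type*} [CommRing K]

/-- The principal minor of `A` on the finset `S`. -/
noncomputable def pmin {ι : Type*} [DecidableEq ι] (A : Matrix ι ι K) (S : Finset ι) : K :=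
  (A.submatrix (fun i : S => (i : ι)) (fun i : S => (i : ι))).det

lemma pmin_reindex {ι κ : Type*} [DecidableEq ι] [DecidableEq κ] (u : κ → ι)
    (hu : Function.Injective u) (A : Matrix ι ι K) (T : Finset κ) :
    pmin (A.submatrix u u) T = pmin A (T.image u) := by
  classical
  have hbij : Function.Bijective
      (fun i : T => (⟨u i, Finset.mem_image_of_mem u i.2⟩ : (T.image u : Finset ι))) := by
    constructor
    · intro a b hab
      exact Subtype.ext (hu (congrArg Subtype.val hab))
    · rintro ⟨j, hj⟩
      obtain ⟨i, hi, rfl⟩ := Finset.mem_image.1 hj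
      exact ⟨⟨i, hi⟩, rfl⟩
  let e : (T : Type _) ≃ (T.image u : Finset ι) := Equiv.ofBijective _ hbij
  have hmat : (A.submatrix u u).submatrix (fun i : T => (i : κ)) (fun i : T => (i : κ))
      = (A.submatrix (fun i : (T.image u : Finset ι) => (i : ι))
          (fun i : (T.image u : Finset ι) => (i : ι))).submatrix e e := by
    ext i j
    simp [e, Equiv.ofBijective]
  rw [pmin, hmat, Matrix.det_submatrix_equiv_self]
  rfl

lemma principalMinorSum_eq_sum_pmin {n : ℕ} (A : Matrix (Fin n) (Fin n) K) (k : ℕ) :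
    principalMinorSum A k = ∑ S ∈ powersetCard k (univ : Finset (Fin n)), pmin A S := by
  classical
  have h1 : principalMinorSum A k = ∑ S : {s : Finset (Fin n) // s.card = k}, pmin A S.1 := by
    refine Finset.sum_congr rfl fun S _ => ?_
    obtain ⟨S, hS⟩ := S
    let e : (Fin k) ≃ (S : Type _) := (S.orderIsoOfFin hS).toEquiv
    have hmat : A.submatrix (S.orderEmbOfFin hS) (S.orderEmbOfFin hS)
        = (A.submatrix (fun i : S => (i : Fin n)) (fun i : S => (i : Fin n))).submatrix e e := by
      ext i j
      simp [e, Finset.coe_orderIsoOfFin_apply, Finset.orderEmbOfFin_apply]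
    rw [hmat, Matrix.det_submatrix_equiv_self]
    rfl
  rw [h1, ← Finset.sum_subtype (powersetCard k (univ : Finset (Fin n)))
    (fun s => Finset.mem_powersetCard_univ) (fun s => pmin A s)]

end PM
section Core

variable {K : Type*} [CommRing K]

lemma eps_sum {n : ℕ} {κ : Type*} [Fintype κ] [DecidableEq κ] (u : κ → Fin n)
    (hu : Function.Injective u) (π : Equiv.Perm κ) (T : Finset κ) :
    ∑ ε : Fin n → Bool, ∏ i ∈ T,
        ((if ε (u (π i)) then (1:K) else -1) * (if ε (u i) then (1:K) else -1))
    = if T.image π = T then ((2:K)^n) else 0 := by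
  classical
  set A : Finset (Fin n) := T.image (fun i => u (π i)) with hA
  set Bs : Finset (Fin n) := T.image u with hBs
  have hstep : ∀ ε : Fin n → Bool,
      ∏ i ∈ T, ((if ε (u (π i)) then (1:K) else -1) * (if ε (u i) then (1:K) else -1))
      = ∏ j : Fin n, ((if j ∈ A then (if ε j then (1:K) else -1) else 1)
          * (if j ∈ Bs then (if ε j then (1:K) else -1) else 1)) := by
    intro ε
    have h1 : ∀ (C : Finset (Fin n)),
        ∏ j : Fin n, (if j ∈ C then (if ε j then (1:K) else -1) else 1)
        = ∏ j ∈ C, (if ε j then (1:K) else -1) := by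
      intro C; rw [Finset.prod_ite_mem, Finset.univ_inter]
    rw [Finset.prod_mul_distrib, Finset.prod_mul_distrib, h1, h1, hA, hBs,
      Finset.prod_image (fun a _ b _ hab => π.injective (hu hab)),
      Finset.prod_image (fun a _ b _ hab => hu hab)]
  simp only [hstep]
  rw [← Fintype.prod_sum (κ := fun _ : Fin n => Bool)
    (f := fun j b => (if j ∈ A then (if b then (1:K) else -1) else 1)
      * (if j ∈ Bs then (if b then (1:K) else -1) else 1))]
  have hfac : ∀ j : Fin n,
      (∑ b : Bool, ((if j ∈ A then (if b then (1:K) else -1) else 1)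
        * (if j ∈ Bs then (if b then (1:K) else -1) else 1)))
      = if ((j ∈ A) ↔ (j ∈ Bs)) then (2:K) else 0 := by
    intro j
    by_cases h₁ : j ∈ A <;> by_cases h₂ : j ∈ Bs <;>
      simp [h₁, h₂, Fintype.sum_bool, one_add_one_eq_two]
  rw [Finset.prod_congr rfl (fun j _ => hfac j)]
  have hABiff : A = Bs ↔ T.image π = T := by
    rw [hA, hBs]
    have : T.image (fun i => u (π i)) = (T.image π).image u := by
      rw [Finset.image_image]; rfl
    rw [this]
    exact ⟨fun h => Finset.image_injective hu h, fun h => by rw [h]⟩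
  by_cases hAB : A = Bs
  · rw [if_pos (hABiff.1 hAB)]
    rw [Finset.prod_congr rfl (fun j _ => if_pos (by rw [hAB]))]
    rw [Finset.prod_const, Finset.card_univ, Fintype.card_fin]
  · rw [if_neg (fun h => hAB (hABiff.2 h))]
    obtain ⟨j, hj⟩ : ∃ j, ¬((j ∈ A) ↔ (j ∈ Bs)) := by
      by_contra h
      push_neg at h
      exact hAB (Finset.ext fun j => h j)
    exact Finset.prod_eq_zero (Finset.mem_univ j) (if_neg hj)

lemma det_blocks {ι : Type*} [Fintype ι] [DecidableEq ι] (Y Z : Matrix ι ι K) (T : Finset ι) :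
    ∑ π : Equiv.Perm ι, (if T.image π = T then
        ((Equiv.Perm.sign π : ℤ) : K) * ((∏ i ∈ T, Y (π i) i) * ∏ i ∈ Tᶜ, Z (π i) i) else 0)
    = pmin Y T * pmin Z Tᶜ := by
  classical
  set D : Matrix ι ι K :=
    Matrix.of (fun i j => if i ∈ T ∧ j ∈ T then Y i j
      else if i ∉ T ∧ j ∉ T then Z i j else 0) with hD
  have key : ∀ π : Equiv.Perm ι,
      (if T.image π = T then
        ((Equiv.Perm.sign π : ℤ):K) * ((∏ i ∈ T, Y (π i) i) * ∏ i ∈ Tᶜ, Z (π i) i) else 0)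
      = ((Equiv.Perm.sign π : ℤ):K) * ∏ i, D (π i) i := by
    intro π
    by_cases h : T.image π = T
    · rw [if_pos h]
      congr 1
      rw [← Finset.prod_mul_prod_compl T (fun i => D (π i) i)]
      congr 1
      · refine Finset.prod_congr rfl fun i hi => ?_
        have hπi : π i ∈ T := h ▸ Finset.mem_image_of_mem π hi
        simp [hD, hπi, hi]
      · refine Finset.prod_congr rfl fun i hi => ?_
        have hi' : i ∉ T := Finset.mem_compl.1 hi
        have hπi : π i ∉ T := by
          intro hmem
          rw [← h] at hmem
          obtain ⟨i', hmem', he⟩ := Finset.mem_image.1 hmem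
          exact hi' (by rwa [← π.injective he])
        simp [hD, hπi, hi']
    · rw [if_neg h]
      have hsub : ¬ (T.image π ⊆ T) := fun hs => h (Finset.eq_of_subset_of_card_le hs
        (by rw [Finset.card_image_of_injective _ π.injective]))
      obtain ⟨x, hx, hxT⟩ := Finset.not_subset.1 hsub
      obtain ⟨i, hi, rfl⟩ := Finset.mem_image.1 hx
      rw [Finset.prod_eq_zero (Finset.mem_univ i) (by simp [hD, hxT, hi]), mul_zero]
  rw [Finset.sum_congr rfl (fun π _ => key π), ← Matrix.det_apply']
  rw [← Matrix.det_submatrix_equiv_self (Equiv.sumCompl (· ∈ T)) D]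
  have hblock : D.submatrix (Equiv.sumCompl (· ∈ T)) (Equiv.sumCompl (· ∈ T))
      = Matrix.fromBlocks
          (Y.submatrix (fun i : T => (i : ι)) (fun i : T => (i : ι))) 0 0
          (Z.submatrix (fun i : {x // x ∉ T} => (i : ι)) (fun i : {x // x ∉ T} => (i : ι))) := by
    ext i j
    rcases i with i | i <;> rcases j with j | j <;>
      simp [hD, Matrix.fromBlocks, i.2, j.2]
  rw [hblock, Matrix.det_fromBlocks_zero₁₂]
  congr 1
  have hz : (Z.submatrix (fun i : {x // x ∉ T} => (i : ι)) (fun i : {x // x ∉ T} => (i : ι))).submatrix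
        (Equiv.subtypeEquivRight (fun x => Finset.mem_compl))
        (Equiv.subtypeEquivRight (fun x => Finset.mem_compl))
      = Z.submatrix (fun i : (Tᶜ : Finset ι) => (i : ι)) (fun i : (Tᶜ : Finset ι) => (i : ι)) := by
    ext i j
    simp [Equiv.subtypeEquivRight]
    rfl
  rw [pmin, ← hz, Matrix.det_submatrix_equiv_self]

end Core
section SignAvg

variable {K : Type*} [CommRing K]

lemma image_compl_val {n : ℕ} (S : Finset (Fin n)) (T : Finset (S : Type _)) :
    (Tᶜ : Finset (S : Type _)).image (fun i : S => (i : Fin n))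
      = S \ T.image (fun i : S => (i : Fin n)) := by
  ext j
  simp only [Finset.mem_image, Finset.mem_sdiff, Finset.mem_compl]
  constructor
  · rintro ⟨i, hi, rfl⟩
    refine ⟨i.2, fun hj => hi ?_⟩
    obtain ⟨i', hi', he⟩ := hj
    rwa [← Subtype.ext he]
  · rintro ⟨hjS, hj⟩
    exact ⟨⟨j, hjS⟩, fun hmem => hj ⟨⟨j, hjS⟩, hmem, rfl⟩, rfl⟩

lemma sign_avg {n : ℕ} (X B : Matrix (Fin n) (Fin n) K) (S : Finset (Fin n)) :
    ∑ ε : Fin n → Bool, pmin (signMatrix K ε * X * signMatrix K ε + B) S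
    = (2:K)^n * ∑ T ∈ S.powerset, pmin X T * pmin B (S \ T) := by
  classical
  set Y : Matrix (S : Type _) (S : Type _) K :=
    X.submatrix (fun i : S => (i : Fin n)) (fun i : S => (i : Fin n)) with hY
  set Z : Matrix (S : Type _) (S : Type _) K :=
    B.submatrix (fun i : S => (i : Fin n)) (fun i : S => (i : Fin n)) with hZ
  have step1 : ∀ ε : Fin n → Bool,
      pmin (signMatrix K ε * X * signMatrix K ε + B) S
      = ∑ π : Equiv.Perm (S : Type _), ((Equiv.Perm.sign π : ℤ) : K) *
          ∏ i : (S : Type _), ((if ε ↑(π i) then (1:K) else -1) * Y (π i) i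
            * (if ε ↑i then (1:K) else -1) + Z (π i) i) := by
    intro ε
    rw [pmin, Matrix.det_apply']
    refine Finset.sum_congr rfl fun π _ => ?_
    congr 1
    refine Finset.prod_congr rfl fun i _ => ?_
    simp [signMatrix, Matrix.mul_diagonal, Matrix.diagonal_mul, hY, hZ]
  simp only [step1]
  rw [Finset.sum_comm]
  have step2 : ∀ π : Equiv.Perm (S : Type _),
      ∑ ε : Fin n → Bool, (((Equiv.Perm.sign π : ℤ):K) *
          ∏ i : (S : Type _), ((if ε ↑(π i) then (1:K) else -1) * Y (π i) i
            * (if ε ↑i then (1:K) else -1) + Z (π i) i))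
      = ∑ T : Finset (S : Type _), (if T.image π = T then
          ((2:K)^n) * (((Equiv.Perm.sign π : ℤ):K) *
            ((∏ i ∈ T, Y (π i) i) * ∏ i ∈ Tᶜ, Z (π i) i)) else 0) := by
    intro π
    have hprod : ∀ ε : Fin n → Bool,
        ∏ i : (S : Type _), ((if ε ↑(π i) then (1:K) else -1) * Y (π i) i
            * (if ε ↑i then (1:K) else -1) + Z (π i) i)
        = ∑ T : Finset (S : Type _),
            ((∏ i ∈ T, ((if ε ↑(π i) then (1:K) else -1) * (if ε ↑i then (1:K) else -1)))
              * ∏ i ∈ T, Y (π i) i) * ∏ i ∈ Tᶜ, Z (π i) i := by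
      intro ε
      rw [Fintype.prod_add]
      refine Finset.sum_congr rfl fun T _ => ?_
      congr 1
      rw [← Finset.prod_mul_distrib]
      exact Finset.prod_congr rfl fun i _ => by ring
    have hmain : ∑ ε : Fin n → Bool,
        ∏ i : (S : Type _), ((if ε ↑(π i) then (1:K) else -1) * Y (π i) i
            * (if ε ↑i then (1:K) else -1) + Z (π i) i)
        = ∑ T : Finset (S : Type _), (if T.image π = T then ((2:K)^n) else 0) *
            ((∏ i ∈ T, Y (π i) i) * ∏ i ∈ Tᶜ, Z (π i) i) := by
      simp only [hprod]
      rw [Finset.sum_comm]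
      refine Finset.sum_congr rfl fun T _ => ?_
      rw [← eps_sum (fun i : S => (i : Fin n)) Subtype.val_injective π T, Finset.sum_mul]
      exact Finset.sum_congr rfl fun ε _ => by ring
    rw [← Finset.mul_sum, hmain, Finset.mul_sum]
    refine Finset.sum_congr rfl fun T _ => ?_
    by_cases hc : T.image π = T
    · rw [if_pos hc, if_pos hc]; ring
    · rw [if_neg hc, if_neg hc]; ring
  rw [Finset.sum_congr rfl (fun π _ => step2 π), Finset.sum_comm]
  have step3 : ∀ (c : Prop) [Decidable c] (z : K),
      (if c then (2:K)^n * z else 0) = (2:K)^n * (if c then z else 0) := by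
    intro c _ z; split <;> simp
  simp only [step3]
  simp only [← Finset.mul_sum]
  congr 1
  have step4 : ∀ T : Finset (S : Type _),
      (∑ π : Equiv.Perm (S : Type _), (if T.image π = T then
          ((Equiv.Perm.sign π : ℤ):K) * ((∏ i ∈ T, Y (π i) i) * ∏ i ∈ Tᶜ, Z (π i) i) else 0))
      = pmin X (T.image (fun i : S => (i : Fin n)))
        * pmin B ((Tᶜ : Finset (S : Type _)).image (fun i : S => (i : Fin n))) := by
    intro T
    rw [det_blocks Y Z T, hY, hZ, pmin_reindex _ Subtype.val_injective,
      pmin_reindex _ Subtype.val_injective]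
  rw [Finset.sum_congr rfl (fun T _ => step4 T)]
  refine Finset.sum_nbij' (fun T => T.image (fun i : S => (i : Fin n)))
    (fun T' => S.attach.filter (fun i => (i : Fin n) ∈ T')) ?_ ?_ ?_ ?_ ?_
  · intro T _
    rw [Finset.mem_powerset]
    intro j hj
    obtain ⟨i, _, rfl⟩ := Finset.mem_image.1 hj
    exact i.2
  · intro T' _
    exact Finset.mem_univ _
  · intro T _
    ext i
    simp only [Finset.mem_filter, Finset.mem_attach, true_and, Finset.mem_image]
    constructor
    · rintro ⟨i', hi', he⟩
      rwa [← Subtype.ext he]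
    · intro hi
      exact ⟨i, hi, rfl⟩
  · intro T' hT'
    rw [Finset.mem_powerset] at hT'
    ext j
    simp only [Finset.mem_image, Finset.mem_filter, Finset.mem_attach, true_and]
    constructor
    · rintro ⟨i, hi, rfl⟩
      exact hi
    · intro hj
      exact ⟨⟨j, hT' hj⟩, hj, rfl⟩
  · intro T _
    rw [image_compl_val]

end SignAvg
section Counting

variable {K : Type*} [CommRing K]

lemma exists_perm_image {α : Type*} [Fintype α] [DecidableEq α] {s t : Finset α}
    (h : s.card = t.card) : ∃ σ : Equiv.Perm α, s.image σ = t := by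
  classical
  have e1 : (s : Type _) ≃ (t : Type _) := Fintype.equivOfCardEq (by simp [h])
  have e2 : {x // x ∉ s} ≃ {x // x ∉ t} := by
    refine Fintype.equivOfCardEq ?_
    rw [Fintype.card_subtype_compl, Fintype.card_subtype_compl]
    simp [Fintype.card_subtype, Finset.filter_mem_eq_inter, h]
  refine ⟨(Equiv.sumCompl (· ∈ s)).symm.trans ((e1.sumCongr e2).trans (Equiv.sumCompl (· ∈ t))), ?_⟩
  apply Finset.eq_of_subset_of_card_le
  · intro j hj
    obtain ⟨i, hi, rfl⟩ := Finset.mem_image.1 hj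
    simp only [Equiv.trans_apply, Equiv.sumCompl_symm_apply_of_pos hi,
      Equiv.sumCongr_apply, Sum.map_inl, Equiv.sumCompl_apply_inl]
    exact (e1 ⟨i, hi⟩).2
  · rw [Finset.card_image_of_injective _ (Equiv.injective _), h]

lemma fiber_card {n : ℕ} (T V : Finset (Fin n)) (h : V.card = T.card) :
    (Finset.univ.filter fun σ : Equiv.Perm (Fin n) => T.image σ = V).card
      = T.card.factorial * (n - T.card).factorial := by
  classical
  have key : ∀ V₁ V₂ : Finset (Fin n), V₁.card = T.card → V₂.card = T.card →
      (Finset.univ.filter fun σ : Equiv.Perm (Fin n) => T.image σ = V₁).card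
        = (Finset.univ.filter fun σ : Equiv.Perm (Fin n) => T.image σ = V₂).card := by
    intro V₁ V₂ h₁ h₂
    obtain ⟨τ, hτ⟩ := exists_perm_image (h₁.trans h₂.symm)
    have hback : ∀ W : Finset (Fin n), (W.image ⇑τ).image ⇑τ⁻¹ = W := by
      intro W
      rw [Finset.image_image]
      have hcomp : (⇑τ⁻¹ ∘ ⇑τ) = id := by funext x; simp
      rw [hcomp, Finset.image_id]
    refine Finset.card_nbij' (fun σ => τ * σ) (fun σ => τ⁻¹ * σ) ?_ ?_ ?_ ?_
    · intro σ hσ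
      simp only [Finset.mem_coe, Finset.mem_filter] at hσ ⊢
      refine ⟨Finset.mem_univ _, ?_⟩
      have him : T.image ⇑(τ * σ) = (T.image ⇑σ).image ⇑τ := by
        rw [Finset.image_image]; rfl
      rw [him, hσ.2, hτ]
    · intro σ hσ
      simp only [Finset.mem_coe, Finset.mem_filter] at hσ ⊢
      refine ⟨Finset.mem_univ _, ?_⟩
      have him : T.image ⇑(τ⁻¹ * σ) = (T.image ⇑σ).image ⇑τ⁻¹ := by
        rw [Finset.image_image]; rfl
      rw [him, hσ.2, ← hτ, hback]
    · intro σ _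
      exact inv_mul_cancel_left τ σ
    · intro σ _
      exact mul_inv_cancel_left τ σ
  have total : ∑ V' ∈ Finset.powersetCard T.card (Finset.univ : Finset (Fin n)),
      (Finset.univ.filter fun σ : Equiv.Perm (Fin n) => T.image σ = V').card
      = (n : ℕ).factorial := by
    rw [← Finset.card_eq_sum_card_fiberwise (fun σ _ => by
      rw [Finset.mem_coe, Finset.mem_powersetCard_univ]
      exact Finset.card_image_of_injective _ (Equiv.injective σ))]
    rw [Finset.card_univ, Fintype.card_perm, Fintype.card_fin]
  have hconst : ∑ V' ∈ Finset.powersetCard T.card (Finset.univ : Finset (Fin n)),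
      (Finset.univ.filter fun σ : Equiv.Perm (Fin n) => T.image σ = V').card
      = (Finset.powersetCard T.card (Finset.univ : Finset (Fin n))).card *
        (Finset.univ.filter fun σ : Equiv.Perm (Fin n) => T.image σ = V).card := by
    rw [Finset.sum_congr rfl (fun V' hV' => key V' V
      (Finset.mem_powersetCard_univ.1 hV') h), Finset.sum_const, smul_eq_mul]
  have hTn : T.card ≤ n := by
    simpa using Finset.card_le_card (Finset.subset_univ T)
  have hcard : (Finset.powersetCard T.card (Finset.univ : Finset (Fin n))).card
      = Nat.choose n T.card := by
    rw [Finset.card_powersetCard, Finset.card_univ, Fintype.card_fin]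
  rw [hcard] at hconst
  have hmain := hconst.symm.trans total
  have hfact : Nat.choose n T.card * (T.card.factorial * (n - T.card).factorial)
      = n.factorial := by
    rw [← mul_assoc]
    exact Nat.choose_mul_factorial_mul_factorial hTn
  exact Nat.eq_of_mul_eq_mul_left (Nat.choose_pos hTn) (hmain.trans hfact.symm)

lemma sum_perm_image {n : ℕ} (A : Matrix (Fin n) (Fin n) K) (T : Finset (Fin n)) :
    ∑ σ : Equiv.Perm (Fin n), pmin A (T.image σ)
      = (T.card.factorial * (n - T.card).factorial : ℕ) *
        ∑ V ∈ Finset.powersetCard T.card (Finset.univ : Finset (Fin n)), pmin A V := by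
  classical
  have h1 : ∀ σ : Equiv.Perm (Fin n), pmin A (T.image σ)
      = ∑ V ∈ Finset.powersetCard T.card (Finset.univ : Finset (Fin n)),
          (if T.image σ = V then pmin A V else 0) := by
    intro σ
    rw [Finset.sum_ite_eq (Finset.powersetCard T.card Finset.univ) (T.image σ) (pmin A),
      if_pos (Finset.mem_powersetCard_univ.2 (Finset.card_image_of_injective _ σ.injective))]
  rw [Finset.sum_congr rfl (fun σ _ => h1 σ), Finset.sum_comm, Finset.mul_sum]
  refine Finset.sum_congr rfl fun V hV => ?_
  rw [← Finset.sum_filter, Finset.sum_const, nsmul_eq_mul,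
    fiber_card T V (Finset.mem_powersetCard_univ.1 hV)]

lemma double_sum_reorg {M : Type*} [AddCommMonoid M] {n k : ℕ}
    (F : Finset (Fin n) → Finset (Fin n) → M) :
    ∑ S ∈ Finset.powersetCard k (Finset.univ : Finset (Fin n)), ∑ T ∈ S.powerset, F T (S \ T)
    = ∑ i ∈ Finset.range (k+1),
        ∑ U ∈ Finset.powersetCard (k-i) (Finset.univ : Finset (Fin n)),
          ∑ T ∈ Finset.powersetCard i (Finset.univ \ U), F T U := by
  classical
  conv_lhs => rw [Finset.sum_sigma']
  conv_rhs => rw [Finset.sum_sigma', Finset.sum_sigma']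
  refine Finset.sum_nbij' (fun p => ⟨⟨p.2.card, p.1 \ p.2⟩, p.2⟩)
    (fun q => ⟨q.2 ∪ q.1.2, q.2⟩) ?_ ?_ ?_ ?_ ?_
  · rintro ⟨S, T⟩ hST
    rw [Finset.mem_sigma, Finset.mem_powersetCard_univ, Finset.mem_powerset] at hST
    obtain ⟨hS, hT⟩ := hST
    rw [Finset.mem_sigma, Finset.mem_sigma, Finset.mem_range, Finset.mem_powersetCard_univ,
      Finset.mem_powersetCard]
    refine ⟨⟨Nat.lt_succ_of_le (by rw [← hS]; exact Finset.card_le_card hT), ?_⟩, ?_, rfl⟩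
    · rw [Finset.card_sdiff_of_subset hT, hS]
    · intro x hx
      simp only [Finset.mem_sdiff, Finset.mem_univ, true_and]
      exact fun hc => hc.2 hx
  · rintro ⟨⟨i, U⟩, T⟩ hq
    rw [Finset.mem_sigma, Finset.mem_sigma, Finset.mem_range, Finset.mem_powersetCard_univ,
      Finset.mem_powersetCard] at hq
    obtain ⟨⟨hi, hU⟩, hTU, hT⟩ := hq
    have hdisj : Disjoint T U := (Finset.subset_sdiff.1 hTU).2
    rw [Finset.mem_sigma, Finset.mem_powersetCard_univ, Finset.mem_powerset]
    refine ⟨?_, Finset.subset_union_left⟩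
    rw [Finset.card_union_of_disjoint hdisj, hT, hU]
    omega
  · rintro ⟨S, T⟩ hST
    rw [Finset.mem_sigma, Finset.mem_powersetCard_univ, Finset.mem_powerset] at hST
    have h1 : T ∪ (S \ T) = S := Finset.union_sdiff_of_subset hST.2
    show (⟨T ∪ (S \ T), T⟩ : Σ _ : Finset (Fin n), Finset (Fin n)) = ⟨S, T⟩
    rw [h1]
  · rintro ⟨⟨i, U⟩, T⟩ hq
    rw [Finset.mem_sigma, Finset.mem_sigma, Finset.mem_range, Finset.mem_powersetCard_univ,
      Finset.mem_powersetCard] at hq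
    obtain ⟨⟨hi, hU⟩, hTU, hT⟩ := hq
    have hdisj : Disjoint T U := (Finset.subset_sdiff.1 hTU).2
    show (⟨⟨T.card, (T ∪ U) \ T⟩, T⟩ : Σ _ : Σ _ : ℕ, Finset (Fin n), Finset (Fin n))
      = ⟨⟨i, U⟩, T⟩
    rw [hT, Finset.union_sdiff_cancel_left hdisj]
  · rintro ⟨S, T⟩ _
    rfl

end Counting
theorem sum_principalMinorSum_conj_add
    {K : Type*} [CommRing K] {n : ℕ}
    (A B : Matrix (Fin n) (Fin n) K) (k : ℕ) (hk : k ≤ n) :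
    (∑ σ : Equiv.Perm (Fin n), ∑ ε : Fin n → Bool,
        principalMinorSum
          (signMatrix K ε * σ.permMatrix K * A * (σ.permMatrix K)⁻¹ * signMatrix K ε + B) k)
      = (2 ^ n : ℕ) *
        ∑ i ∈ Finset.range (k + 1),
          ((n - i).factorial * ((n - k + i).factorial / (n - k).factorial) : ℕ) *
            principalMinorSum A i * principalMinorSum B (k - i) := by
  classical
  have hP : ∀ σ : Equiv.Perm (Fin n),
      σ.permMatrix K * A * (σ.permMatrix K)⁻¹ = A.submatrix ⇑σ ⇑σ := by
    intro σ
    have h1 : (σ.permMatrix K)⁻¹ = (σ⁻¹).permMatrix K := by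
      apply Matrix.inv_eq_right_inv
      show σ.toPEquiv.toMatrix * (σ⁻¹).toPEquiv.toMatrix = (1 : Matrix _ _ K)
      rw [← PEquiv.toMatrix_trans, ← Equiv.toPEquiv_trans]
      have h2 : σ.trans σ⁻¹ = Equiv.refl (Fin n) := by
        ext x; simp
      rw [h2, Equiv.toPEquiv_refl, PEquiv.toMatrix_refl]
    rw [h1]
    show σ.toPEquiv.toMatrix * A * (σ⁻¹).toPEquiv.toMatrix = _
    rw [PEquiv.toMatrix_toPEquiv_mul, PEquiv.mul_toMatrix_toPEquiv, Matrix.submatrix_submatrix]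
    rfl
  have hmat : ∀ (σ : Equiv.Perm (Fin n)) (ε : Fin n → Bool),
      signMatrix K ε * σ.permMatrix K * A * (σ.permMatrix K)⁻¹ * signMatrix K ε
      = signMatrix K ε * (A.submatrix ⇑σ ⇑σ) * signMatrix K ε := by
    intro σ ε
    rw [mul_assoc (signMatrix K ε) (σ.permMatrix K) A,
      mul_assoc (signMatrix K ε) (σ.permMatrix K * A) ((σ.permMatrix K)⁻¹)]
    exact congrArg (fun M => signMatrix K ε * M * signMatrix K ε) (hP σ)
  have hcoef : ∀ i, i ≤ k →
      ((n - i).factorial * ((n - k + i).factorial / (n - k).factorial) : ℕ)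
      = Nat.choose (n - k + i) i * (i.factorial * (n - i).factorial) := by
    intro i hik
    have h1 : (n - k + i).factorial / (n - k).factorial
        = Nat.choose (n - k + i) i * i.factorial := by
      refine Nat.div_eq_of_eq_mul_left (Nat.factorial_pos _) ?_
      calc (n - k + i).factorial
          = Nat.choose (n - k + i) i * i.factorial * ((n - k + i) - i).factorial :=
            (Nat.choose_mul_factorial_mul_factorial (Nat.le_add_left i (n - k))).symm
        _ = Nat.choose (n - k + i) i * i.factorial * (n - k).factorial := by
            rw [Nat.add_sub_cancel]
    rw [h1]; ring
  calc (∑ σ : Equiv.Perm (Fin n), ∑ ε : Fin n → Bool,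
        principalMinorSum
          (signMatrix K ε * σ.permMatrix K * A * (σ.permMatrix K)⁻¹ * signMatrix K ε + B) k)
      = ∑ σ : Equiv.Perm (Fin n), (2:K)^n *
          ∑ i ∈ Finset.range (k+1),
            ∑ U ∈ Finset.powersetCard (k-i) (Finset.univ : Finset (Fin n)),
              ∑ T ∈ Finset.powersetCard i (Finset.univ \ U),
                pmin (A.submatrix ⇑σ ⇑σ) T * pmin B U := by
        refine Finset.sum_congr rfl fun σ _ => ?_
        have e1 : ∀ ε : Fin n → Bool,
            principalMinorSum
              (signMatrix K ε * σ.permMatrix K * A * (σ.permMatrix K)⁻¹ * signMatrix K ε + B) k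
            = ∑ S ∈ Finset.powersetCard k (Finset.univ : Finset (Fin n)),
                pmin (signMatrix K ε * (A.submatrix ⇑σ ⇑σ) * signMatrix K ε + B) S := by
          intro ε
          rw [hmat σ ε, principalMinorSum_eq_sum_pmin]
        rw [Finset.sum_congr rfl fun ε _ => e1 ε, Finset.sum_comm,
          Finset.sum_congr rfl fun S _ => sign_avg (A.submatrix ⇑σ ⇑σ) B S,
          ← Finset.mul_sum,
          double_sum_reorg (fun T U => pmin (A.submatrix ⇑σ ⇑σ) T * pmin B U)]
    _ = (2:K)^n * ∑ i ∈ Finset.range (k+1),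
          ∑ U ∈ Finset.powersetCard (k-i) (Finset.univ : Finset (Fin n)),
            ∑ T ∈ Finset.powersetCard i (Finset.univ \ U),
              ∑ σ : Equiv.Perm (Fin n), pmin (A.submatrix ⇑σ ⇑σ) T * pmin B U := by
        rw [← Finset.mul_sum]
        congr 1
        rw [Finset.sum_comm]
        refine Finset.sum_congr rfl fun i _ => ?_
        rw [Finset.sum_comm]
        refine Finset.sum_congr rfl fun U _ => ?_
        rw [Finset.sum_comm]
    _ = (2 ^ n : ℕ) *
        ∑ i ∈ Finset.range (k + 1),
          ((n - i).factorial * ((n - k + i).factorial / (n - k).factorial) : ℕ) *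
            principalMinorSum A i * principalMinorSum B (k - i) := by
        rw [Nat.cast_pow, Nat.cast_ofNat]
        congr 1
        refine Finset.sum_congr rfl fun i hi => ?_
        have hik : i ≤ k := Nat.lt_succ_iff.1 (Finset.mem_range.1 hi)
        rw [hcoef i hik, principalMinorSum_eq_sum_pmin B (k-i), Finset.mul_sum]
        refine Finset.sum_congr rfl fun U hU => ?_
        have hUc : U.card = k - i := Finset.mem_powersetCard_univ.1 hU
        have hTstep : ∀ T ∈ Finset.powersetCard i (Finset.univ \ U),
            ∑ σ : Equiv.Perm (Fin n), pmin (A.submatrix ⇑σ ⇑σ) T * pmin B U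
            = (((i.factorial * (n - i).factorial : ℕ) : K) * principalMinorSum A i)
                * pmin B U := by
          intro T hT
          have hTc : T.card = i := (Finset.mem_powersetCard.1 hT).2
          rw [← Finset.sum_mul]
          congr 1
          rw [Finset.sum_congr rfl fun (σ : Equiv.Perm (Fin n)) _ =>
              pmin_reindex (⇑σ) (Equiv.injective σ) A T,
            sum_perm_image A T, hTc, ← principalMinorSum_eq_sum_pmin]
        rw [Finset.sum_congr rfl hTstep, Finset.sum_const, nsmul_eq_mul]
        have hcard2 : (Finset.powersetCard i (Finset.univ \ U)).card
            = Nat.choose (n - k + i) i := by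
          rw [Finset.card_powersetCard, Finset.card_sdiff_of_subset (Finset.subset_univ U),
            Finset.card_univ, Fintype.card_fin, hUc]
          congr 1
          omega
        rw [hcard2]
        push_cast
        ring
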